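/- For any two halfspaces g(x) = sign(⟨v,x⟩ − q) and h(x) = sign(⟨u,x⟩ − p) with unit normals u, v, and any rotation-invariant distribution μ on ℝ^n, dist_μ(g,h) ≤ α/π + hdist_μ(p,q), where α = arccos⟨u,v⟩ and hdist_μ(p,q) is the distance between the two halfspaces with common normal e₁ and thresholds p, q. -/

import Mathlib

open MeasureTheory Set Real
open scoped RealInnerProductSpace ENNReal

lemma cos_ge_iff_abs_le {c t β : ℝ} (hc : β = Real.arccos c) (hc1 : -1 ≤ c) (hc2 : c ≤ 1)
    (ht : -π ≤ t) (ht2 : t ≤ π) : c ≤ Real.cos t ↔ |t| ≤ β := by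
  have hβcos : Real.cos β = c := by rw [hc]; exact Real.cos_arccos hc1 hc2
  have hβπ : β ≤ π := hc ▸ Real.arccos_le_pi c
  have hβ0 : 0 ≤ β := hc ▸ Real.arccos_nonneg c
  have habs : Real.cos |t| = Real.cos t := Real.cos_abs t
  constructor
  · intro h
    by_contra hlt
    push_neg at hlt
    have h2 : Real.cos |t| < Real.cos β :=
      Real.cos_lt_cos_of_nonneg_of_le_pi hβ0 (abs_le.mpr ⟨ht, ht2⟩) hlt
    rw [habs, hβcos] at h2
    linarith
  · intro h
    calc c = Real.cos β := hβcos.symm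
    _ ≤ Real.cos |t| := Real.cos_le_cos_of_nonneg_of_le_pi (abs_nonneg t) hβπ h
    _ = Real.cos t := habs

lemma arc0 (c α : ℝ) (h0 : 0 ≤ α) (hπ : α ≤ π) :
    volume {ψ : ℝ | ψ ∈ Set.Ioc (-π) π ∧
      ¬((c ≤ Real.cos (ψ + α)) ↔ (c ≤ Real.cos ψ))} ≤ ENNReal.ofReal (2 * α) := by
  rcases lt_or_ge 1 c with hc | hc2
  · have : {ψ : ℝ | ψ ∈ Set.Ioc (-π) π ∧
        ¬((c ≤ Real.cos (ψ + α)) ↔ (c ≤ Real.cos ψ))} = ∅ := by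
      ext ψ; simp only [mem_setOf_eq, mem_empty_iff_false, iff_false, not_and]
      intro _ h
      have h1 : ¬ c ≤ Real.cos (ψ + α) := by
        intro hh; exact absurd (hh.trans (Real.cos_le_one _)) (not_le.2 hc)
      have h2 : ¬ c ≤ Real.cos ψ := by
        intro hh; exact absurd (hh.trans (Real.cos_le_one _)) (not_le.2 hc)
      tauto
    rw [this]; simp
  rcases lt_or_ge c (-1) with hc | hc1
  · have : {ψ : ℝ | ψ ∈ Set.Ioc (-π) π ∧
        ¬((c ≤ Real.cos (ψ + α)) ↔ (c ≤ Real.cos ψ))} = ∅ := by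
      ext ψ; simp only [mem_setOf_eq, mem_empty_iff_false, iff_false, not_and]
      intro _ h
      have h1 : c ≤ Real.cos (ψ + α) := hc.le.trans (Real.neg_one_le_cos _)
      have h2 : c ≤ Real.cos ψ := hc.le.trans (Real.neg_one_le_cos _)
      tauto
    rw [this]; simp
  -- main case
  set β := Real.arccos c with hβ
  have hβπ : β ≤ π := Real.arccos_le_pi c
  have hβ0 : 0 ≤ β := Real.arccos_nonneg c
  have key : {ψ : ℝ | ψ ∈ Set.Ioc (-π) π ∧
      ¬((c ≤ Real.cos (ψ + α)) ↔ (c ≤ Real.cos ψ))} ⊆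
      Set.Ioc (β - α) β ∪ Set.Ico (max (-β - α) (-π)) (-β) ∪ Set.Icc (2 * π - β - α) π := by
    rintro ψ ⟨⟨hψl, hψr⟩, hxor⟩
    have iffψ : c ≤ Real.cos ψ ↔ |ψ| ≤ β := cos_ge_iff_abs_le hβ hc1 hc2 hψl.le hψr
    rcases Classical.em (c ≤ Real.cos ψ) with hA | hA
    · -- case A: c ≤ cos ψ, ¬ c ≤ cos (ψ+α)
      have hB : ¬ c ≤ Real.cos (ψ + α) := by tauto
      have habs : |ψ| ≤ β := iffψ.mp hA
      rw [abs_le] at habs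
      left; left
      constructor
      · by_contra hle
        push_neg at hle
        have h1 : |ψ + α| ≤ β := abs_le.mpr ⟨by linarith, by linarith⟩
        have := (cos_ge_iff_abs_le hβ hc1 hc2 (by linarith) (by linarith)).mpr h1
        exact hB this
      · exact habs.2
    · have hB : c ≤ Real.cos (ψ + α) := by tauto
      have habs : ¬ |ψ| ≤ β := fun h => hA (iffψ.mpr h)
      rw [abs_le] at habs
      push_neg at habs
      rcases le_or_gt (ψ + α) π with hcase | hcase
      · have h1 : |ψ + α| ≤ β :=
          (cos_ge_iff_abs_le hβ hc1 hc2 (by linarith) hcase).mp hB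
        rw [abs_le] at h1
        have hlt : ψ < -β := by
          by_contra hge
          push_neg at hge
          have := habs hge
          linarith [h1.2]
        left; right
        exact ⟨max_le (by linarith [h1.1]) (by linarith), hlt⟩
      · -- ψ + α > π
        have ht1 : -π ≤ ψ + α - 2 * π := by linarith
        have ht2 : ψ + α - 2 * π ≤ π := by linarith [Real.pi_pos]
        have hcos : Real.cos (ψ + α - 2 * π) = Real.cos (ψ + α) := Real.cos_sub_two_pi _
        have h1 : |ψ + α - 2 * π| ≤ β :=
          (cos_ge_iff_abs_le hβ hc1 hc2 ht1 ht2).mp (by rw [hcos]; exact hB)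
        rw [abs_le] at h1
        right
        exact ⟨by linarith, hψr⟩
  refine (measure_mono key).trans ?_
  refine (measure_union_le _ _).trans ?_
  refine (add_le_add_left (measure_union_le _ _) _).trans ?_
  rw [Real.volume_Ioc, Real.volume_Ico, Real.volume_Icc]
  have e1 : β - (β - α) = α := by ring
  rw [e1]
  have h23 : ENNReal.ofReal (-β - max (-β - α) (-π)) + ENNReal.ofReal (π - (2 * π - β - α))
      ≤ ENNReal.ofReal α := by
    rcases le_total (β + α) π with hc | hc
    · have hm : max (-β - α) (-π) = -β - α := max_eq_left (by linarith)
      rw [hm]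
      have : π - (2 * π - β - α) ≤ 0 := by linarith
      rw [ENNReal.ofReal_eq_zero.mpr this, add_zero]
      exact ENNReal.ofReal_le_ofReal (by linarith)
    · have hm : max (-β - α) (-π) = -π := max_eq_right (by linarith)
      rw [hm, ← ENNReal.ofReal_add (by linarith) (by linarith)]
      exact ENNReal.ofReal_le_ofReal (by linarith)
  calc ENNReal.ofReal α + ENNReal.ofReal (-β - max (-β - α) (-π))
        + ENNReal.ofReal (π - (2 * π - β - α))
      ≤ ENNReal.ofReal α + ENNReal.ofReal α := by
        rw [add_assoc]; exact add_le_add_right h23 _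
    _ = ENNReal.ofReal (2 * α) := by
        rw [← ENNReal.ofReal_add h0 h0]; congr 1; ring

lemma arcT (c α t : ℝ) (h0 : 0 ≤ α) (hπ : α ≤ π) :
    volume {ψ : ℝ | ψ ∈ Set.Ioc t (t + 2 * π) ∧
      ¬((c ≤ Real.cos (ψ + α)) ↔ (c ≤ Real.cos ψ))} ≤ ENNReal.ofReal (2 * α) := by
  set X : Set ℝ := {ψ : ℝ | ¬((c ≤ Real.cos (ψ + α)) ↔ (c ≤ Real.cos ψ))} with hX
  have hXmeas : MeasurableSet X := by
    have hA : MeasurableSet {ψ : ℝ | c ≤ Real.cos (ψ + α)} := by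
      have : Continuous fun ψ : ℝ => Real.cos (ψ + α) :=
        Real.continuous_cos.comp (continuous_id.add continuous_const)
      exact measurableSet_le measurable_const this.measurable
    have hB : MeasurableSet {ψ : ℝ | c ≤ Real.cos ψ} :=
      measurableSet_le measurable_const Real.continuous_cos.measurable
    have : X = ({ψ : ℝ | c ≤ Real.cos (ψ + α)} ∩ {ψ : ℝ | c ≤ Real.cos ψ}ᶜ) ∪
        ({ψ : ℝ | c ≤ Real.cos ψ} ∩ {ψ : ℝ | c ≤ Real.cos (ψ + α)}ᶜ) := by
      ext ψ; simp only [hX, mem_setOf_eq, mem_union, mem_inter_iff, mem_compl_iff]; tauto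
    rw [this]
    exact ((hA.inter hB.compl).union (hB.inter hA.compl))
  have hper : ∀ ψ : ℝ, (ψ + 2 * π) ∈ X ↔ ψ ∈ X := by
    intro ψ
    simp only [hX, mem_setOf_eq]
    rw [show ψ + 2 * π + α = (ψ + α) + 2 * π by ring, Real.cos_add_two_pi, Real.cos_add_two_pi]
  have hfper : Function.Periodic (X.indicator fun _ => (1 : ℝ)) (2 * π) := by
    intro ψ
    by_cases h : ψ ∈ X
    · rw [Set.indicator_of_mem ((hper ψ).mpr h), Set.indicator_of_mem h]
    · rw [Set.indicator_of_notMem (fun hh => h ((hper ψ).mp hh)),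
        Set.indicator_of_notMem h]
  have hkey : ∀ a : ℝ, (volume (X ∩ Set.Ioc a (a + 2 * π))).toReal
      = ∫ ψ in a..(a + 2 * π), X.indicator (fun _ => (1 : ℝ)) ψ := by
    intro a
    rw [intervalIntegral.integral_of_le (by linarith [Real.pi_pos])]
    rw [MeasureTheory.integral_indicator_const (1 : ℝ) hXmeas,
      measureReal_def, Measure.restrict_apply hXmeas]
    simp
  have hfin : ∀ a : ℝ, volume (X ∩ Set.Ioc a (a + 2 * π)) ≠ ⊤ := by
    intro a
    exact ne_top_of_le_ne_top (by simp [Real.volume_Ioc, ENNReal.mul_eq_top]) (measure_mono inter_subset_right)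
  have heq : volume (X ∩ Set.Ioc t (t + 2 * π)) = volume (X ∩ Set.Ioc (-π) (-π + 2 * π)) := by
    rw [← ENNReal.ofReal_toReal (hfin t), ← ENNReal.ofReal_toReal (hfin (-π))]
    rw [hkey, hkey, hfper.intervalIntegral_add_eq t (-π)]
  have hset : {ψ : ℝ | ψ ∈ Set.Ioc t (t + 2 * π) ∧
      ¬((c ≤ Real.cos (ψ + α)) ↔ (c ≤ Real.cos ψ))} = X ∩ Set.Ioc t (t + 2 * π) := by
    ext ψ; simp only [hX, mem_setOf_eq, mem_inter_iff]; tauto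
  rw [hset, heq]
  have hset2 : X ∩ Set.Ioc (-π) (-π + 2 * π) = {ψ : ℝ | ψ ∈ Set.Ioc (-π) π ∧
      ¬((c ≤ Real.cos (ψ + α)) ↔ (c ≤ Real.cos ψ))} := by
    ext ψ
    simp only [hX, mem_setOf_eq, mem_inter_iff]
    constructor
    · rintro ⟨h1, h2⟩; exact ⟨by rw [show -π + 2 * π = π by ring] at h2; exact h2, h1⟩
    · rintro ⟨h2, h1⟩; exact ⟨h1, by rw [show -π + 2 * π = π by ring]; exact h2⟩
  rw [hset2]
  exact arc0 c α h0 hπ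

lemma slice8841 (a b q α : ℝ) (h0 : 0 ≤ α) (hπ : α ≤ π) :
    volume {θ : ℝ | θ ∈ Set.Ioc 0 (2 * π) ∧
      ¬((q ≤ a * Real.cos (θ + α) + b * Real.sin (θ + α)) ↔
        (q ≤ a * Real.cos θ + b * Real.sin θ))} ≤ ENNReal.ofReal (2 * α) := by
  set z : ℂ := Complex.mk a b with hz
  have hre : z.re = a := rfl
  have him : z.im = b := rfl
  set r := ‖z‖ with hr
  set φ := Complex.arg z with hφ
  have ha : r * Real.cos φ = a := by rw [hr, hφ, Complex.norm_mul_cos_arg, hre]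
  have hb : r * Real.sin φ = b := by rw [hr, hφ, Complex.norm_mul_sin_arg, him]
  rcases eq_or_lt_of_le (norm_nonneg z) with hr0 | hr0
  · have ha0 : a = 0 := by rw [← ha, hr, ← hr0]; ring
    have hb0 : b = 0 := by rw [← hb, hr, ← hr0]; ring
    have : {θ : ℝ | θ ∈ Set.Ioc 0 (2 * π) ∧
      ¬((q ≤ a * Real.cos (θ + α) + b * Real.sin (θ + α)) ↔
        (q ≤ a * Real.cos θ + b * Real.sin θ))} = ∅ := by
      ext θ; simp [ha0, hb0]
    rw [this]; simp
  · have hrpos : 0 < r := hr0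
    set c := q / r with hc
    have hiff : ∀ θ : ℝ, (q ≤ a * Real.cos θ + b * Real.sin θ) ↔ (c ≤ Real.cos (θ - φ)) := by
      intro θ
      rw [← ha, ← hb, hc, div_le_iff₀ hrpos]
      rw [Real.cos_sub]
      constructor <;> intro h <;> nlinarith
    have hpre : {θ : ℝ | θ ∈ Set.Ioc 0 (2 * π) ∧
        ¬((q ≤ a * Real.cos (θ + α) + b * Real.sin (θ + α)) ↔
          (q ≤ a * Real.cos θ + b * Real.sin θ))} =
        (fun θ : ℝ => θ + (-φ)) ⁻¹' {ψ : ℝ | ψ ∈ Set.Ioc (-φ) (-φ + 2 * π) ∧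
          ¬((c ≤ Real.cos (ψ + α)) ↔ (c ≤ Real.cos ψ))} := by
      ext θ
      simp only [mem_preimage, mem_setOf_eq, Set.mem_Ioc]
      rw [hiff θ, hiff (θ + α), show θ + α - φ = θ + -φ + α by ring,
        show θ - φ = θ + -φ by ring]
      constructor
      · rintro ⟨⟨h1, h2⟩, h3⟩; exact ⟨⟨by linarith, by linarith⟩, h3⟩
      · rintro ⟨⟨h1, h2⟩, h3⟩; exact ⟨⟨by linarith, by linarith⟩, h3⟩
    rw [hpre, measure_preimage_add_right]
    exact arcT c α (-φ) h0 hπ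
variable {n : ℕ}

noncomputable def rotL8841 (u w : EuclideanSpace ℝ (Fin n)) (θ : ℝ) :
    EuclideanSpace ℝ (Fin n) →ₗ[ℝ] EuclideanSpace ℝ (Fin n) where
  toFun x := x + ((Real.cos θ - 1) * ⟪u, x⟫ + Real.sin θ * ⟪w, x⟫) • u +
    (-(Real.sin θ) * ⟪u, x⟫ + (Real.cos θ - 1) * ⟪w, x⟫) • w
  map_add' x y := by
    simp only [inner_add_right]
    module
  map_smul' c x := by
    simp only [inner_smul_right, RingHom.id_apply]
    module

lemma rotL8841_apply (u w : EuclideanSpace ℝ (Fin n)) (θ : ℝ) (x : EuclideanSpace ℝ (Fin n)) :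
    rotL8841 u w θ x = x + ((Real.cos θ - 1) * ⟪u, x⟫ + Real.sin θ * ⟪w, x⟫) • u +
      (-(Real.sin θ) * ⟪u, x⟫ + (Real.cos θ - 1) * ⟪w, x⟫) • w := rfl

section

variable {u w : EuclideanSpace ℝ (Fin n)}

lemma inner_uu8841 (hu : ‖u‖ = 1) : ⟪u, u⟫ = 1 := by
  rw [real_inner_self_eq_norm_mul_norm, hu]; norm_num

lemma inner_ww8841 (hw : ‖w‖ = 1) : ⟪w, w⟫ = 1 := by
  rw [real_inner_self_eq_norm_mul_norm, hw]; norm_num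

lemma inner_wu8841 (huw : ⟪u, w⟫ = 0) : ⟪w, u⟫ = 0 := by rw [real_inner_comm]; exact huw

lemma inner_u_rotL8841 (hu : ‖u‖ = 1) (huw : ⟪u, w⟫ = 0) (θ : ℝ) (x : EuclideanSpace ℝ (Fin n)) :
    ⟪u, rotL8841 u w θ x⟫ = Real.cos θ * ⟪u, x⟫ + Real.sin θ * ⟪w, x⟫ := by
  rw [rotL8841_apply]
  simp only [inner_add_right, real_inner_smul_right, inner_uu8841 hu, huw]
  ring

lemma inner_w_rotL8841 (hw : ‖w‖ = 1) (huw : ⟪u, w⟫ = 0) (θ : ℝ) (x : EuclideanSpace ℝ (Fin n)) :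
    ⟪w, rotL8841 u w θ x⟫ = -(Real.sin θ) * ⟪u, x⟫ + Real.cos θ * ⟪w, x⟫ := by
  rw [rotL8841_apply]
  simp only [inner_add_right, real_inner_smul_right, inner_ww8841 hw, inner_wu8841 huw]
  ring

lemma norm_rotL8841 (hu : ‖u‖ = 1) (hw : ‖w‖ = 1) (huw : ⟪u, w⟫ = 0) (θ : ℝ) (x : EuclideanSpace ℝ (Fin n)) :
    ‖rotL8841 u w θ x‖ = ‖x‖ := by
  have hinner : ⟪rotL8841 u w θ x, rotL8841 u w θ x⟫ = ⟪x, x⟫ := by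
    rw [rotL8841_apply]
    simp only [inner_add_right, inner_add_left, real_inner_smul_right, real_inner_smul_left,
      inner_uu8841 hu, inner_ww8841 hw, huw, inner_wu8841 huw]
    have hs := Real.sin_sq_add_cos_sq θ
    have hxu : ⟪x, u⟫ = ⟪u, x⟫ := real_inner_comm u x
    have hxw : ⟪x, w⟫ = ⟪w, x⟫ := real_inner_comm w x
    simp only [hxu, hxw]
    linear_combination (⟪u, x⟫ * ⟪u, x⟫ + ⟪w, x⟫ * ⟪w, x⟫) * hs
  have h1 : ‖rotL8841 u w θ x‖ ^ 2 = ‖x‖ ^ 2 := by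
    rw [← real_inner_self_eq_norm_sq, ← real_inner_self_eq_norm_sq, hinner]
  nlinarith [norm_nonneg (rotL8841 u w θ x), norm_nonneg x, h1]

noncomputable def rotIso8841 (hu : ‖u‖ = 1) (hw : ‖w‖ = 1) (huw : ⟪u, w⟫ = 0) (θ : ℝ) :
    EuclideanSpace ℝ (Fin n) ≃ₗᵢ[ℝ] EuclideanSpace ℝ (Fin n) :=
  LinearIsometry.toLinearIsometryEquiv
    ⟨rotL8841 u w θ, norm_rotL8841 hu hw huw θ⟩ rfl

lemma rotIso8841_apply (hu : ‖u‖ = 1) (hw : ‖w‖ = 1) (huw : ⟪u, w⟫ = 0) (θ : ℝ) (x : EuclideanSpace ℝ (Fin n)) :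
    rotIso8841 hu hw huw θ x = rotL8841 u w θ x := rfl

end

lemma exists_iso8841 (hn : 0 < n) (u : EuclideanSpace ℝ (Fin n)) (hu : ‖u‖ = 1) :
    ∃ e : EuclideanSpace ℝ (Fin n) ≃ₗᵢ[ℝ] EuclideanSpace ℝ (Fin n),
      e (EuclideanSpace.single ⟨0, hn⟩ 1) = u := by
  have hcard : Module.finrank ℝ (EuclideanSpace ℝ (Fin n)) = Fintype.card (Fin n) := by
    simp [finrank_euclideanSpace_fin]
  have horth : Orthonormal ℝ (Set.restrict ({⟨0, hn⟩} : Set (Fin n)) (fun _ => u)) := by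
    constructor
    · intro i; exact hu
    · intro i j hij
      exact absurd (Subtype.ext (by
        have hi := i.2; have hj := j.2
        simp only [Set.mem_singleton_iff] at hi hj
        rw [hi, hj])) hij
  obtain ⟨b, hb⟩ := horth.exists_orthonormalBasis_extension_of_card_eq hcard
  refine ⟨b.repr.symm, ?_⟩
  rw [OrthonormalBasis.repr_symm_single]
  exact hb _ (Set.mem_singleton _)

lemma xorset_meas8841 {β : Type*} [MeasurableSpace β] {f g : β → ℝ} {q p : ℝ}
    (hf : Measurable f) (hg : Measurable g) :
    MeasurableSet {x | ¬((q ≤ f x) ↔ (p ≤ g x))} := by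
  have hA : MeasurableSet {x | q ≤ f x} := measurableSet_le measurable_const hf
  have hB : MeasurableSet {x | p ≤ g x} := measurableSet_le measurable_const hg
  have hset : {x | ¬((q ≤ f x) ↔ (p ≤ g x))} =
      ({x | q ≤ f x} ∩ {x | p ≤ g x}ᶜ) ∪ ({x | p ≤ g x} ∩ {x | q ≤ f x}ᶜ) := by
    ext x
    simp only [mem_setOf_eq, mem_union, mem_inter_iff, mem_compl_iff]
    tauto
  rw [hset]
  exact (hA.inter hB.compl).union (hB.inter hA.compl)

set_option maxHeartbeats 1000000 in
lemma B1bound8841 {n : ℕ} (μ : Measure (EuclideanSpace ℝ (Fin n)))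
    [IsProbabilityMeasure μ]
    (hRI : ∀ e : EuclideanSpace ℝ (Fin n) ≃ₗᵢ[ℝ] EuclideanSpace ℝ (Fin n), μ.map e = μ)
    (u v : EuclideanSpace ℝ (Fin n)) (hu : ‖u‖ = 1) (hv : ‖v‖ = 1) (q : ℝ) :
    μ {x | ¬((q ≤ ⟪v, x⟫) ↔ (q ≤ ⟪u, x⟫))} ≤
      ENNReal.ofReal (Real.arccos ⟪u, v⟫ / π) := by
  set t := (⟪u, v⟫ : ℝ) with htdef
  have habs : |t| ≤ 1 := by
    have := abs_real_inner_le_norm u v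
    rwa [hu, hv, one_mul] at this
  have ht1 : -1 ≤ t := (abs_le.mp habs).1
  have ht2 : t ≤ 1 := (abs_le.mp habs).2
  set α := Real.arccos t with hαdef
  have hα0 : 0 ≤ α := Real.arccos_nonneg t
  have hαπ : α ≤ π := Real.arccos_le_pi t
  have hcosα : Real.cos α = t := Real.cos_arccos ht1 ht2
  have hsinα : Real.sin α = Real.sqrt (1 - t ^ 2) := Real.sin_arccos t
  set d := v - t • u with hddef
  have hud : ⟪u, d⟫ = 0 := by
    rw [hddef, inner_sub_right, real_inner_smul_right, inner_uu8841 hu]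
    ring
  have hdd : ⟪d, d⟫ = 1 - t ^ 2 := by
    rw [hddef]
    simp only [inner_sub_left, inner_sub_right, real_inner_smul_left, real_inner_smul_right,
      inner_uu8841 hu, inner_uu8841 hv]
    have hvu : (⟪v, u⟫ : ℝ) = t := by rw [real_inner_comm]
    rw [hvu]
    ring
  have hnd : ‖d‖ ^ 2 = 1 - t ^ 2 := by rw [← real_inner_self_eq_norm_sq, hdd]
  by_cases hd0 : ‖d‖ = 0
  · -- degenerate case : v = ± u
    have ht : t ^ 2 = 1 := by rw [hd0] at hnd; nlinarith
    have hveq : v = t • u := by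
      have hz : d = 0 := norm_eq_zero.mp hd0
      rw [hddef] at hz
      linear_combination (norm := module) hz
    have hcases : t = 1 ∨ t = -1 := by
      have hfac : (t - 1) * (t + 1) = 0 := by nlinarith
      rcases mul_eq_zero.mp hfac with h | h
      · left; linarith
      · right; linarith
    rcases hcases with h1 | h1
    · -- v = u, set is empty
      have hvu : v = u := by rw [hveq, h1, one_smul]
      have hset : {x : EuclideanSpace ℝ (Fin n) | ¬((q ≤ ⟪v, x⟫) ↔ (q ≤ ⟪u, x⟫))} = ∅ := by
        ext x; simp [hvu]
      rw [hset]
      simp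
    · -- v = -u, α = π, bound is 1
      have hαπ' : α = π := by rw [hαdef, h1, Real.arccos_neg_one]
      have hle1 : μ {x : EuclideanSpace ℝ (Fin n) | ¬((q ≤ ⟪v, x⟫) ↔ (q ≤ ⟪u, x⟫))} ≤ 1 :=
        prob_le_one
      refine hle1.trans ?_
      rw [hαπ', div_self Real.pi_ne_zero, ENNReal.ofReal_one]
  · -- main case
    have hdpos : 0 < ‖d‖ := lt_of_le_of_ne (norm_nonneg d) (Ne.symm hd0)
    set w : EuclideanSpace ℝ (Fin n) := ‖d‖⁻¹ • d with hwdef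
    have hw : ‖w‖ = 1 := by
      rw [hwdef, norm_smul, norm_inv, norm_norm, inv_mul_cancel₀ hd0]
    have huw : ⟪u, w⟫ = 0 := by rw [hwdef, real_inner_smul_right, hud, mul_zero]
    have hdw : d = ‖d‖ • w := by rw [hwdef, smul_smul, mul_inv_cancel₀ hd0, one_smul]
    have hnd' : ‖d‖ = Real.sin α := by
      rw [hsinα, ← hnd, Real.sqrt_sq (norm_nonneg d)]
    have hvdec : v = t • u + Real.sin α • w := by
      rw [← hnd', ← hdw, hddef]
      abel
    have hiu : ∀ (θ : ℝ) (x : EuclideanSpace ℝ (Fin n)),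
        ⟪u, rotL8841 u w θ x⟫ = ⟪u, x⟫ * Real.cos θ + ⟪w, x⟫ * Real.sin θ := by
      intro θ x
      rw [inner_u_rotL8841 hu huw]
      ring
    have hiv : ∀ (θ : ℝ) (x : EuclideanSpace ℝ (Fin n)),
        ⟪v, rotL8841 u w θ x⟫ = ⟪u, x⟫ * Real.cos (θ + α) + ⟪w, x⟫ * Real.sin (θ + α) := by
      intro θ x
      conv_lhs => rw [hvdec]
      rw [inner_add_left, real_inner_smul_left, real_inner_smul_left,
        inner_u_rotL8841 hu huw, inner_w_rotL8841 hw huw, Real.cos_add, Real.sin_add, ← hcosα]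
      ring
    set B₁ := {x : EuclideanSpace ℝ (Fin n) | ¬((q ≤ ⟪v, x⟫) ↔ (q ≤ ⟪u, x⟫))} with hB₁def
    have hB1 : MeasurableSet B₁ := by
      rw [hB₁def]
      exact xorset_meas8841 (Continuous.measurable (continuous_const.inner continuous_id))
        (Continuous.measurable (continuous_const.inner continuous_id))
    have hFcont : Continuous fun p : ℝ × EuclideanSpace ℝ (Fin n) => rotL8841 u w p.1 p.2 := by
      have hcu : Continuous fun p : ℝ × EuclideanSpace ℝ (Fin n) => (⟪u, p.2⟫ : ℝ) :=
        continuous_const.inner continuous_snd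
      have hcw : Continuous fun p : ℝ × EuclideanSpace ℝ (Fin n) => (⟪w, p.2⟫ : ℝ) :=
        continuous_const.inner continuous_snd
      have hcos : Continuous fun p : ℝ × EuclideanSpace ℝ (Fin n) => Real.cos p.1 :=
        Real.continuous_cos.comp continuous_fst
      have hsin : Continuous fun p : ℝ × EuclideanSpace ℝ (Fin n) => Real.sin p.1 :=
        Real.continuous_sin.comp continuous_fst
      simp only [rotL8841_apply]
      exact (continuous_snd.add
        ((((hcos.sub continuous_const).mul hcu).add (hsin.mul hcw)).smul continuous_const)).add
        ((((hsin.neg).mul hcu).add ((hcos.sub continuous_const).mul hcw)).smul continuous_const)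
    have hFmeas : MeasurableSet {p : ℝ × EuclideanSpace ℝ (Fin n) | rotL8841 u w p.1 p.2 ∈ B₁} :=
      hB1.preimage hFcont.measurable
    have hrotcont : ∀ θ : ℝ, Continuous (rotL8841 u w θ) := by
      intro θ
      have hcoef : ⇑(rotL8841 u w θ) = fun x : EuclideanSpace ℝ (Fin n) =>
          x + ((Real.cos θ - 1) * ⟪u, x⟫ + Real.sin θ * ⟪w, x⟫) • u +
          (-(Real.sin θ) * ⟪u, x⟫ + (Real.cos θ - 1) * ⟪w, x⟫) • w :=
        funext (fun x => rotL8841_apply u w θ x)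
      rw [hcoef]
      have hcu : Continuous fun x : EuclideanSpace ℝ (Fin n) => (⟪u, x⟫ : ℝ) :=
        continuous_const.inner continuous_id
      have hcw : Continuous fun x : EuclideanSpace ℝ (Fin n) => (⟪w, x⟫ : ℝ) :=
        continuous_const.inner continuous_id
      exact (continuous_id.add (((continuous_const.mul hcu).add
          (continuous_const.mul hcw)).smul continuous_const)).add
        (((continuous_const.mul hcu).add
          (continuous_const.mul hcw)).smul continuous_const)
    have hrot : ∀ θ : ℝ, μ ((rotL8841 u w θ) ⁻¹' B₁) = μ B₁ := by
      intro θ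
      have he := hRI (rotIso8841 hu hw huw θ)
      have hcoe : ⇑(rotIso8841 hu hw huw θ) = ⇑(rotL8841 u w θ) :=
        funext fun x => rotIso8841_apply hu hw huw θ x
      have hemeas : Measurable ⇑(rotIso8841 hu hw huw θ) := by
        rw [hcoe]; exact (hrotcont θ).measurable
      calc μ ((rotL8841 u w θ) ⁻¹' B₁)
          = μ (⇑(rotIso8841 hu hw huw θ) ⁻¹' B₁) := by rw [hcoe]
        _ = μ.map (rotIso8841 hu hw huw θ) B₁ := (Measure.map_apply hemeas hB1).symm
        _ = μ B₁ := by rw [he]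
    set ν := volume.restrict (Set.Ioc (0 : ℝ) (2 * π)) with hνdef
    set f : ℝ → EuclideanSpace ℝ (Fin n) → ℝ≥0∞ :=
      fun θ x => B₁.indicator (fun _ => (1 : ℝ≥0∞)) (rotL8841 u w θ x) with hfdef
    have huncurry : Function.uncurry f =
        Set.indicator {p : ℝ × EuclideanSpace ℝ (Fin n) | rotL8841 u w p.1 p.2 ∈ B₁}
          (fun _ => (1 : ℝ≥0∞)) := by
      ext p
      by_cases h : rotL8841 u w p.1 p.2 ∈ B₁ <;>
        simp [hfdef, Function.uncurry, h, Set.indicator_apply]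
    have hswap_meas : AEMeasurable (Function.uncurry f) (ν.prod μ) := by
      rw [huncurry]
      exact ((measurable_one).indicator hFmeas).aemeasurable
    have key1 : μ B₁ * ENNReal.ofReal (2 * π) = ∫⁻ θ, μ ((rotL8841 u w θ) ⁻¹' B₁) ∂ν := by
      rw [lintegral_congr hrot, lintegral_const, hνdef, Measure.restrict_apply_univ,
        Real.volume_Ioc]
      norm_num
    have key2 : ∀ θ : ℝ, μ ((rotL8841 u w θ) ⁻¹' B₁) = ∫⁻ x, f θ x ∂μ := by
      intro θ
      rw [← lintegral_indicator_one (hB1.preimage (hrotcont θ).measurable)]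
      apply lintegral_congr
      intro x
      by_cases h : rotL8841 u w θ x ∈ B₁ <;>
        simp [hfdef, h, Set.indicator_apply, Set.mem_preimage]
    have key3 : ∀ x : EuclideanSpace ℝ (Fin n), ∫⁻ θ, f θ x ∂ν ≤ ENNReal.ofReal (2 * α) := by
      intro x
      have hθcont : Continuous fun θ : ℝ => rotL8841 u w θ x := by
        have hcoef : (fun θ : ℝ => rotL8841 u w θ x) = fun θ : ℝ =>
            x + ((Real.cos θ - 1) * ⟪u, x⟫ + Real.sin θ * ⟪w, x⟫) • u +
            (-(Real.sin θ) * ⟪u, x⟫ + (Real.cos θ - 1) * ⟪w, x⟫) • w :=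
          funext fun θ => rotL8841_apply u w θ x
        rw [hcoef]
        exact (continuous_const.add ((((Real.continuous_cos.sub continuous_const).mul
            continuous_const).add (Real.continuous_sin.mul continuous_const)).smul
            continuous_const)).add ((((Real.continuous_sin.neg).mul continuous_const).add
            ((Real.continuous_cos.sub continuous_const).mul continuous_const)).smul
            continuous_const)
      have hmeasθ : MeasurableSet {θ : ℝ | rotL8841 u w θ x ∈ B₁} :=
        hB1.preimage hθcont.measurable
      have hint : ∫⁻ θ, f θ x ∂ν = ν {θ : ℝ | rotL8841 u w θ x ∈ B₁} := by
        rw [← lintegral_indicator_one hmeasθ]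
        apply lintegral_congr
        intro θ
        by_cases h : rotL8841 u w θ x ∈ B₁ <;> simp [hfdef, h, Set.indicator_apply]
      rw [hint, hνdef, Measure.restrict_apply hmeasθ]
      have hsub : {θ : ℝ | rotL8841 u w θ x ∈ B₁} ∩ Set.Ioc 0 (2 * π) =
          {θ : ℝ | θ ∈ Set.Ioc 0 (2 * π) ∧
            ¬((q ≤ ⟪u, x⟫ * Real.cos (θ + α) + ⟪w, x⟫ * Real.sin (θ + α)) ↔
              (q ≤ ⟪u, x⟫ * Real.cos θ + ⟪w, x⟫ * Real.sin θ))} := by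
        ext θ
        simp only [Set.mem_inter_iff, Set.mem_setOf_eq, hB₁def]
        rw [hiv θ x, hiu θ x]
        tauto
      rw [hsub]
      exact slice8841 ⟪u, x⟫ ⟪w, x⟫ q α hα0 hαπ
    have main : μ B₁ * ENNReal.ofReal (2 * π) ≤ ENNReal.ofReal (2 * α) := by
      rw [key1, lintegral_congr key2, lintegral_lintegral_swap hswap_meas]
      calc ∫⁻ x, ∫⁻ θ, f θ x ∂ν ∂μ ≤ ∫⁻ _, ENNReal.ofReal (2 * α) ∂μ := lintegral_mono key3
        _ = ENNReal.ofReal (2 * α) := by simp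
    have h2πpos : 0 < 2 * π := by positivity
    have hfinal : μ B₁ ≤ ENNReal.ofReal (2 * α) / ENNReal.ofReal (2 * π) := by
      rw [ENNReal.le_div_iff_mul_le (Or.inl (by simp [h2πpos, Real.pi_pos])) (Or.inl ENNReal.ofReal_ne_top)]
      exact main
    calc μ B₁ ≤ ENNReal.ofReal (2 * α) / ENNReal.ofReal (2 * π) := hfinal
      _ = ENNReal.ofReal (2 * α / (2 * π)) := (ENNReal.ofReal_div_of_pos h2πpos).symm
      _ = ENNReal.ofReal (α / π) := by rw [mul_div_mul_left α π (by norm_num : (2:ℝ) ≠ 0)]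


lemma ite_ne_iff8841 (P Q : Prop) [Decidable P] [Decidable Q] :
    ((if P then (1 : ℝ) else -1) ≠ (if Q then (1 : ℝ) else -1)) ↔ ¬(P ↔ Q) := by
  by_cases hP : P <;> by_cases hQ : Q <;> simp [hP, hQ] <;> norm_num

lemma B2eq8841 {n : ℕ} (hn : 0 < n) (μ : Measure (EuclideanSpace ℝ (Fin n)))
    (hRI : ∀ e : EuclideanSpace ℝ (Fin n) ≃ₗᵢ[ℝ] EuclideanSpace ℝ (Fin n), μ.map e = μ)
    (u : EuclideanSpace ℝ (Fin n)) (hu : ‖u‖ = 1) (p q : ℝ) :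
    μ {x | ¬((q ≤ ⟪u, x⟫) ↔ (p ≤ ⟪u, x⟫))} =
      μ {x | ¬((p ≤ x ⟨0, hn⟩) ↔ (q ≤ x ⟨0, hn⟩))} := by
  obtain ⟨e, he⟩ := exists_iso8841 hn u hu
  have hB2 : MeasurableSet {x : EuclideanSpace ℝ (Fin n) | ¬((q ≤ ⟪u, x⟫) ↔ (p ≤ ⟪u, x⟫))} :=
    xorset_meas8841 (Continuous.measurable (continuous_const.inner continuous_id))
      (Continuous.measurable (continuous_const.inner continuous_id))
  have hemeas : Measurable ⇑e := e.continuous.measurable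
  have hinner : ∀ x : EuclideanSpace ℝ (Fin n), (⟪u, e x⟫ : ℝ) = x ⟨0, hn⟩ := by
    intro x
    rw [← he, e.inner_map_map, EuclideanSpace.inner_single_left]
    simp
  have hseteq : ⇑e ⁻¹' {x : EuclideanSpace ℝ (Fin n) | ¬((q ≤ ⟪u, x⟫) ↔ (p ≤ ⟪u, x⟫))} =
      {x : EuclideanSpace ℝ (Fin n) | ¬((p ≤ x ⟨0, hn⟩) ↔ (q ≤ x ⟨0, hn⟩))} := by
    ext x
    simp only [Set.mem_preimage, Set.mem_setOf_eq]
    rw [hinner x]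
    tauto
  conv_lhs => rw [← hRI e]
  rw [Measure.map_apply hemeas hB2, hseteq]

theorem stmt_8 (n : ℕ) (hn : 0 < n) (μ : Measure (EuclideanSpace ℝ (Fin n)))
    [IsProbabilityMeasure μ]
    (hRI : ∀ e : EuclideanSpace ℝ (Fin n) ≃ₗᵢ[ℝ] EuclideanSpace ℝ (Fin n), μ.map e = μ)
    (u v : EuclideanSpace ℝ (Fin n)) (hu : ‖u‖ = 1) (hv : ‖v‖ = 1) (p q : ℝ) :
    (μ {x | (if q ≤ ⟪v, x⟫ then (1 : ℝ) else -1) ≠ (if p ≤ ⟪u, x⟫ then (1 : ℝ) else -1)}).toReal ≤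
      Real.arccos ⟪u, v⟫ / Real.pi +
        (μ {x | (if p ≤ x ⟨0, hn⟩ then (1 : ℝ) else -1) ≠
            (if q ≤ x ⟨0, hn⟩ then (1 : ℝ) else -1)}).toReal := by
  have hsets1 : {x : EuclideanSpace ℝ (Fin n) |
      (if q ≤ ⟪v, x⟫ then (1 : ℝ) else -1) ≠ (if p ≤ ⟪u, x⟫ then (1 : ℝ) else -1)} =
      {x : EuclideanSpace ℝ (Fin n) | ¬((q ≤ ⟪v, x⟫) ↔ (p ≤ ⟪u, x⟫))} := by
    ext x; exact ite_ne_iff8841 _ _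
  have hsets2 : {x : EuclideanSpace ℝ (Fin n) |
      (if p ≤ x ⟨0, hn⟩ then (1 : ℝ) else -1) ≠ (if q ≤ x ⟨0, hn⟩ then (1 : ℝ) else -1)} =
      {x : EuclideanSpace ℝ (Fin n) | ¬((p ≤ x ⟨0, hn⟩) ↔ (q ≤ x ⟨0, hn⟩))} := by
    ext x; exact ite_ne_iff8841 _ _
  rw [hsets1, hsets2]
  set B₁ := {x : EuclideanSpace ℝ (Fin n) | ¬((q ≤ ⟪v, x⟫) ↔ (q ≤ ⟪u, x⟫))} with hB₁def
  set B₂ := {x : EuclideanSpace ℝ (Fin n) | ¬((q ≤ ⟪u, x⟫) ↔ (p ≤ ⟪u, x⟫))} with hB₂def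
  have hsub : {x : EuclideanSpace ℝ (Fin n) | ¬((q ≤ ⟪v, x⟫) ↔ (p ≤ ⟪u, x⟫))} ⊆ B₁ ∪ B₂ := by
    intro x hx
    simp only [hB₁def, hB₂def, Set.mem_union, Set.mem_setOf_eq] at *
    tauto
  have h1 := B1bound8841 μ hRI u v hu hv q
  have h2 := B2eq8841 hn μ hRI u hu p q
  have hμB : μ {x : EuclideanSpace ℝ (Fin n) | ¬((q ≤ ⟪v, x⟫) ↔ (p ≤ ⟪u, x⟫))} ≤ μ B₁ + μ B₂ :=
    (measure_mono hsub).trans (measure_union_le _ _)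
  have hne1 : μ B₁ ≠ ⊤ := measure_ne_top μ _
  have hne2 : μ B₂ ≠ ⊤ := measure_ne_top μ _
  have harc : 0 ≤ Real.arccos ⟪u, v⟫ / π := by
    apply div_nonneg (Real.arccos_nonneg _) Real.pi_pos.le
  calc (μ {x : EuclideanSpace ℝ (Fin n) | ¬((q ≤ ⟪v, x⟫) ↔ (p ≤ ⟪u, x⟫))}).toReal
      ≤ (μ B₁ + μ B₂).toReal := ENNReal.toReal_mono (by finiteness) hμB
    _ = (μ B₁).toReal + (μ B₂).toReal := ENNReal.toReal_add hne1 hne2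
    _ ≤ Real.arccos ⟪u, v⟫ / π + (μ B₂).toReal := by
        have : (μ B₁).toReal ≤ Real.arccos ⟪u, v⟫ / π := by
          have := ENNReal.toReal_mono ENNReal.ofReal_ne_top h1
          rwa [ENNReal.toReal_ofReal harc] at this
        exact add_le_add_left this _
    _ = Real.arccos ⟪u, v⟫ / π +
        (μ {x : EuclideanSpace ℝ (Fin n) | ¬((p ≤ x ⟨0, hn⟩) ↔ (q ≤ x ⟨0, hn⟩))}).toReal := by
        rw [h2]
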